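/- arXiv:2512.12409 — 3 statements merged into one kernel-verified Lean document; each statement's English description precedes it below -/
import Mathlib

section
/- Let n be a positive integer and x a natural number. Define for each v the target f(v) as follows: let r = v - n*x and a = x mod n; if r + a ≤ n then f(v) = n*x + n + (r + a), otherwise f(v) = n*x + r + a. Then as v ranges over {n*x + 1, ..., n*(x+1)}, the values f(v) range over {n*(x+1) + 1, ..., n*(x+2)} bijectively (each value attained exactly once). -/
/-- SWLE Lemma 1: the target-view map is a bijection from one block of
views onto the next block. -/
theorem swle_target_bijection (n x : ℕ) (hn : 0 < n) :
    Set.BijOn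
      (fun v : ℕ =>
        if (v - n * x) + x % n ≤ n then n * x + n + ((v - n * x) + x % n)
        else n * x + (v - n * x) + x % n)
      (Set.Icc (n * x + 1) (n * (x + 1)))
      (Set.Icc (n * (x + 1) + 1) (n * (x + 2))) := by
  have ha : x % n < n := Nat.mod_lt _ hn
  set a := x % n with haa
  have h1 : n * (x + 1) = n * x + n := by ring
  have h2 : n * (x + 2) = n * x + 2 * n := by ring
  rw [h1, h2]
  apply Set.InvOn.bijOn
    (f' := fun w : ℕ => if a < w - (n * x + n) then w - n - a else w - a)
  · constructor
    · intro v hv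
      simp only [Set.mem_Icc] at hv
      simp only []
      split_ifs <;> omega
    · intro w hw
      simp only [Set.mem_Icc] at hw
      simp only []
      split_ifs <;> omega
  · intro v hv
    simp only [Set.mem_Icc] at hv ⊢
    split_ifs <;> omega
  · intro w hw
    simp only [Set.mem_Icc] at hw ⊢
    split_ifs <;> omega
end

section
/- Let n ≥ 1 and v ≥ 1 be positive integers and T_z ≥ 1. Define v_target as: v + n + T_z + (⌊v/n⌋ mod n) if v + (⌊v/n⌋ mod n) ≤ ⌈v/n⌉·n; else v + n + T_z if n ∣ v and (v/n) mod n = 1; else v + T_z + (⌊(v-1)/n⌋ mod n). Then v_target - v ≥ T_z + 1. -/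
lemma swle_aux_div (n a b : ℕ) (hn : 1 ≤ n) (hb : b < n) : (n * a + b) / n = a := by
  rw [Nat.mul_add_div hn, Nat.div_eq_of_lt hb]
  omega

lemma swle_aux_mod (n a b : ℕ) (hn : 1 ≤ n) (hb : b < n) : (n * a + b) % n = b := by
  rw [Nat.mul_add_mod, Nat.mod_eq_of_lt hb]

/-- SWLE Lemma 4: the target view computed by the three-case formula is
always at least `T_z + 1` views ahead of the current view. -/
theorem swle_target_gap (n v Tz : ℕ) (hn : 1 ≤ n) (hv : 1 ≤ v) (hTz : 1 ≤ Tz) :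
    (if v + (v / n % n) ≤ ((v + n - 1) / n) * n then
        v + n + Tz + (v / n % n)
     else if n ∣ v ∧ (v / n) % n = 1 then
        v + n + Tz
     else
        v + Tz + ((v - 1) / n % n)) - v ≥ Tz + 1 := by
  split_ifs with h1 h2
  · omega
  · omega
  · suffices h : 1 ≤ (v - 1) / n % n by omega
    rcases Nat.eq_zero_or_pos (v % n) with hr | hr
    · -- n ∣ v
      obtain ⟨q, rfl⟩ := Nat.dvd_of_mod_eq_zero hr
      obtain ⟨q, rfl⟩ : ∃ q', q = q' + 1 := ⟨q - 1, by
        rcases Nat.eq_zero_or_pos q with h0 | h0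
        · simp [h0] at hv
        · omega⟩
      have hmul : n * (q + 1) = n * q + n := Nat.mul_succ n q
      have hdiv : n * (q + 1) / n = q + 1 := by
        have := swle_aux_div n (q + 1) 0 hn hn
        simpa using this
      have hceil : (n * (q + 1) + n - 1) / n = q + 1 := by
        have h' : n * (q + 1) + n - 1 = n * (q + 1) + (n - 1) := by omega
        rw [h', swle_aux_div n (q + 1) (n - 1) hn (by omega)]
      have hqm : 2 ≤ (q + 1) % n := by
        rw [hceil, hdiv] at h1
        have hcm : (q + 1) * n = n * (q + 1) := Nat.mul_comm _ _
        have h1' : 1 ≤ (q + 1) % n := by omega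
        have h2' : ¬ ((q + 1) % n = 1) := fun hc =>
          h2 ⟨⟨q + 1, rfl⟩, by rw [hdiv, hc]⟩
        omega
      have hprev : (n * (q + 1) - 1) / n = q := by
        have h' : n * (q + 1) - 1 = n * q + (n - 1) := by omega
        rw [h', swle_aux_div n q (n - 1) hn (by omega)]
      rw [hprev]
      -- q = (q+1) - 1, and (q+1) % n ≥ 2, so q % n = (q+1) % n - 1 ≥ 1
      have hdm : n * ((q + 1) / n) + (q + 1) % n = q + 1 := Nat.div_add_mod _ _
      have hlt : (q + 1) % n < n := Nat.mod_lt _ hn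
      have hq' : q = n * ((q + 1) / n) + ((q + 1) % n - 1) := by omega
      rw [hq', swle_aux_mod n _ _ hn (by omega)]
      omega
    · -- v % n ≥ 1
      have hvdm : n * (v / n) + v % n = v := Nat.div_add_mod v n
      have hmlt : v % n < n := Nat.mod_lt v hn
      have hprev : (v - 1) / n = v / n := by
        have h' : v - 1 = n * (v / n) + (v % n - 1) := by omega
        rw [h', swle_aux_div n _ _ hn (by omega)]
      rw [hprev]
      have hceil : (v + n - 1) / n = v / n + 1 := by
        have hmul : n * (v / n + 1) = n * (v / n) + n := Nat.mul_succ n (v / n)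
        have h' : v + n - 1 = n * (v / n + 1) + (v % n - 1) := by omega
        rw [h', swle_aux_div n _ _ hn (by omega)]
      rw [hceil] at h1
      have hcm : (v / n + 1) * n = n * (v / n) + n := by ring
      omega
end

section
/- Let n ≥ 1, v ≥ 1 be integers with v + (⌊v/n⌋ mod n) > ⌈v/n⌉·n, n not dividing v or (v/n) mod n ≠ 1, and v/n ≥ 1 in the sense ⌊v/n⌋ ≥ 1. Then ⌊(v-1)/n⌋ mod n ≥ 1. -/
/-- Key sub-step of SWLE Lemma 4: in the "otherwise" case of the
target-view formula, the additive term `⌊(v-1)/n⌋ mod n` is at least 1. -/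
theorem swle_otherwise_term_pos (n v : ℕ) (hn : 1 ≤ n) (hv : 1 ≤ v)
    (hcase1 : v + (v / n % n) > ((v + n - 1) / n) * n)
    (hcase2 : ¬ (n ∣ v ∧ (v / n) % n = 1))
    (hfloor : 1 ≤ v / n) :
    1 ≤ (v - 1) / n % n := by
  obtain ⟨q, r, hqr, hrn⟩ : ∃ q r, v = n * q + r ∧ r < n :=
    ⟨v / n, v % n, (Nat.div_add_mod v n).symm, Nat.mod_lt _ (by omega)⟩
  have hq : v / n = q := by
    rw [hqr, Nat.mul_add_div (by omega), Nat.div_eq_of_lt hrn]; omega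
  rcases Nat.eq_zero_or_pos r with hr0 | hrpos
  · -- n divides v
    subst hr0
    have hdvd : n ∣ v := ⟨q, by rw [hqr]; omega⟩
    have hne : q % n ≠ 1 := fun h => hcase2 ⟨hdvd, by rw [hq]; exact h⟩
    have hq1 : 1 ≤ q := by rw [hq] at hfloor; exact hfloor
    have hceil : (v + n - 1) / n = q := by
      have h1 : v + n - 1 = n * q + (n - 1) := by
        rw [hqr]; generalize n * q = A; omega
      rw [h1, Nat.mul_add_div (by omega), Nat.div_eq_of_lt (by omega)]; omega
    rw [hq, hceil] at hcase1
    have h2 : 1 ≤ q % n := by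
      have hv' : v = n * q := by omega
      nlinarith [hcase1]
    have hmlt : q % n < n := Nat.mod_lt _ (by omega)
    obtain ⟨s, hs⟩ : ∃ s, q = n * s + q % n := ⟨q / n, (Nat.div_add_mod q n).symm⟩
    have hprev : (v - 1) / n = q - 1 := by
      have hnq : n ≤ n * q := Nat.le_mul_of_pos_right n (by omega)
      have h3 : v - 1 = n * (q - 1) + (n - 1) := by
        rw [hqr, Nat.mul_sub]
        generalize n * q = A at hnq ⊢
        omega
      rw [h3, Nat.mul_add_div (by omega), Nat.div_eq_of_lt (by omega)]; omega
    rw [hprev]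
    generalize hm : q % n = m at h2 hne hs hmlt
    have ht2 : 2 ≤ m := by omega
    have h4 : q - 1 = n * s + (m - 1) := by
      nth_rewrite 1 [hs]
      exact Nat.add_sub_assoc (by omega) _
    rw [h4, Nat.mul_add_mod, Nat.mod_eq_of_lt (by omega)]
    omega
  · -- n does not divide v
    have hceil : (v + n - 1) / n = q + 1 := by
      have h1 : v + n - 1 = n * (q + 1) + (r - 1) := by
        rw [hqr, Nat.mul_add, Nat.mul_one]
        generalize n * q = A
        omega
      rw [h1, Nat.mul_add_div (by omega), Nat.div_eq_of_lt (by omega)]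
    have hprev : (v - 1) / n = q := by
      have h2 : v - 1 = n * q + (r - 1) := by
        rw [hqr]; generalize n * q = A; omega
      rw [h2, Nat.mul_add_div (by omega), Nat.div_eq_of_lt (by omega)]; omega
    rw [hq, hceil] at hcase1
    rw [hprev]
    have hlt : v + 1 ≤ (q + 1) * n := by nlinarith [hqr, hrn]
    linarith [hcase1, hlt]
end
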